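/- Let V be a finite set with capacities κ: V → ℕ₊, let μ ≥ 2 be real with κ(v) ≥ log₂ μ for all v, and let requests be processed online such that request j is admitted and assigned to a chain c_j ⊆ V only if Σ_{v∈c_j} (μ^{λ_v(j)} - 1) ≤ ℓ, where λ_v(j) = |{i < j admitted : v ∈ c_i}|/κ(v) and μ = 2ℓ+2. Then at every time j and every node v, λ_v(j) ≤ 1, i.e., |{admitted i : v ∈ c_i}| ≤ κ(v). -/

import Mathlib

theorem stmt_13 {V : Type*} [DecidableEq V]
    (κ : V → ℕ) (hκpos : ∀ v, 0 < κ v)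
    (ℓ μ : ℝ) (hμ2 : 2 ≤ μ) (hμ : μ = 2 * ℓ + 2)
    (hκ : ∀ v, Real.logb 2 μ ≤ (κ v : ℝ))
    (admitted : ℕ → Prop) [DecidablePred admitted]
    (c : ℕ → Finset V)
    (load : ℕ → V → ℝ)
    (hload : ∀ j v, load j v =
      ((Finset.range j).filter (fun i => admitted i ∧ v ∈ c i)).card / (κ v : ℝ))
    (hadmit : ∀ j, admitted j → ∑ v ∈ c j, (μ ^ load j v - 1) ≤ ℓ) :
    ∀ j v, load j v ≤ 1 := by
  have hℓ0 : 0 ≤ ℓ := by linarith [hμ2, hμ]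
  have hload0 : ∀ j v, 0 ≤ load j v := by
    intro j v
    rw [hload]
    positivity
  -- key: the count never exceeds κ v
  have hN : ∀ j v, (((Finset.range j).filter (fun i => admitted i ∧ v ∈ c i)).card : ℕ) ≤ κ v := by
    intro j
    induction j with
    | zero => intro v; simp
    | succ j ih =>
      intro v
      rw [Finset.range_add_one, Finset.filter_insert]
      by_cases h : admitted j ∧ v ∈ c j
      · rw [if_pos h]
        rw [Finset.card_insert_of_notMem (by simp)]
        by_cases hlt : ((Finset.range j).filter (fun i => admitted i ∧ v ∈ c i)).card < κ v
        · omega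
        · exfalso
          push_neg at hlt
          have hl1 : (1 : ℝ) ≤ load j v := by
            rw [hload]
            rw [le_div_iff₀ (by exact_mod_cast hκpos v)]
            simpa using (Nat.cast_le (α := ℝ)).2 hlt
          have hterm : μ - 1 ≤ μ ^ load j v - 1 := by
            have : μ ^ (1 : ℝ) ≤ μ ^ load j v :=
              Real.rpow_le_rpow_of_exponent_le (by linarith) hl1
            rw [Real.rpow_one] at this
            linarith
          have hnonneg : ∀ w ∈ c j, 0 ≤ μ ^ load j w - 1 := by
            intro w _
            have : (1 : ℝ) ≤ μ ^ load j w := by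
              rw [show (1:ℝ) = μ ^ (0:ℝ) by simp]
              exact Real.rpow_le_rpow_of_exponent_le (by linarith) (hload0 j w)
            linarith
          have hsum : μ ^ load j v - 1 ≤ ∑ w ∈ c j, (μ ^ load j w - 1) :=
            Finset.single_le_sum hnonneg h.2
          have := hadmit j h.1
          linarith [hμ]
      · rw [if_neg h]
        exact ih v
  intro j v
  rw [hload, div_le_one (by exact_mod_cast hκpos v)]
  exact_mod_cast hN j v
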